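/- For every total computable martingale d there exists a computable sequence A : ℕ → Bool such that d(A↾(n+1)) ≤ d(A↾n) for every n ∈ ℕ; in particular d does not succeed on A. -/

import Mathlib

/-- A martingale: nonnegative with the fairness condition. -/
def IsMartingale (d : List Bool → ℚ) : Prop :=
  (∀ w, 0 ≤ d w) ∧ ∀ w, 2 * d w = d (w ++ [false]) + d (w ++ [true])

/-- The prefix A↾n = [A 0, …, A (n−1)]. -/
def prefixSeq (A : ℕ → Bool) (n : ℕ) : List Bool := (List.range n).map A

/-- A martingale succeeds on A if its capital along A is unbounded. -/
def Succeeds (d : List Bool → ℚ) (A : ℕ → Bool) : Prop :=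
  ∀ c : ℚ, ∃ n, c < d (prefixSeq A n)

namespace MGAux

open Encodable Denumerable

/-! ### Decoding the structural encoding of ℚ at the level of ℕ -/

/-- magnitude (natAbs) of the integer with nat-code `i`. -/
def mag (i : ℕ) : ℕ := i / 2 + i % 2

lemma encode_int_ofNat (n : ℕ) : Encodable.encode (Int.ofNat n) = 2 * n := rfl
lemma encode_int_negSucc (n : ℕ) : Encodable.encode (Int.negSucc n) = 2 * n + 1 := rfl

lemma mag_encode (m : ℤ) : mag (Encodable.encode m) = m.natAbs := by
  cases m with
  | ofNat n =>
    rw [encode_int_ofNat]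
    show 2 * n / 2 + 2 * n % 2 = n
    omega
  | negSucc n =>
    rw [encode_int_negSucc]
    show (2 * n + 1) / 2 + (2 * n + 1) % 2 = n + 1
    omega

/-- the "old" structural encoding of ℚ. -/
def E0 (q : ℚ) : ℕ := Nat.pair (Encodable.encode q.num) q.den

lemma E0_eq_encode (q : ℚ) : E0 q = Encodable.encode q := rfl

/-- comparison of two rationals given by their structural codes. -/
def leCode (c₁ c₂ : ℕ) : Bool :=
  if c₁.unpair.1 % 2 = 1 then
    if c₂.unpair.1 % 2 = 1 then
      decide (mag c₂.unpair.1 * c₁.unpair.2 ≤ mag c₁.unpair.1 * c₂.unpair.2)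
    else true
  else
    if c₂.unpair.1 % 2 = 1 then false
    else decide (mag c₁.unpair.1 * c₂.unpair.2 ≤ mag c₂.unpair.1 * c₁.unpair.2)

lemma leCode_correct (a b : ℚ) : leCode (E0 a) (E0 b) = decide (a ≤ b) := by
  have hda : (0 : ℤ) < (a.den : ℤ) := by exact_mod_cast a.pos
  have hdb : (0 : ℤ) < (b.den : ℤ) := by exact_mod_cast b.pos
  unfold leCode E0
  simp only [Nat.unpair_pair]
  rcases ha : a.num with n₁ | n₁ <;> rcases hb : b.num with n₂ | n₂
  · rw [encode_int_ofNat, encode_int_ofNat]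
    rw [if_neg (by omega), if_neg (by omega)]
    have h₁ : mag (2 * n₁) = n₁ := by unfold mag; omega
    have h₂ : mag (2 * n₂) = n₂ := by unfold mag; omega
    rw [h₁, h₂, decide_eq_decide, Rat.le_iff, ha, hb, Int.ofNat_eq_natCast,
      Int.ofNat_eq_natCast]
    exact_mod_cast Iff.rfl
  · rw [encode_int_ofNat, encode_int_negSucc]
    rw [if_neg (by omega), if_pos (by omega)]
    have : ¬ (a ≤ b) := by
      rw [Rat.le_iff, ha, hb, Int.negSucc_eq, Int.ofNat_eq_natCast]
      intro h
      nlinarith [mul_nonneg (Int.natCast_nonneg n₁) hdb.le,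
        mul_pos (show (0:ℤ) < (n₂:ℤ) + 1 by positivity) hda]
    simp [this]
  · rw [encode_int_negSucc, encode_int_ofNat]
    rw [if_pos (by omega), if_neg (by omega)]
    have : a ≤ b := by
      rw [Rat.le_iff, ha, hb, Int.negSucc_eq, Int.ofNat_eq_natCast]
      nlinarith [mul_nonneg (Int.natCast_nonneg n₂) hda.le,
        mul_pos (show (0:ℤ) < (n₁:ℤ) + 1 by positivity) hdb]
    simp [this]
  · rw [encode_int_negSucc, encode_int_negSucc]
    rw [if_pos (by omega), if_pos (by omega)]
    have h₁ : mag (2 * n₁ + 1) = n₁ + 1 := by unfold mag; omega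
    have h₂ : mag (2 * n₂ + 1) = n₂ + 1 := by unfold mag; omega
    rw [h₁, h₂, decide_eq_decide, Rat.le_iff, ha, hb, Int.negSucc_eq, Int.negSucc_eq,
      neg_mul, neg_mul, neg_le_neg_iff]
    exact_mod_cast Iff.rfl

/-! ### Validity of codes -/

/-- coprimality test by bounded search. -/
def coprimeB (m j : ℕ) : Bool :=
  (List.range (j + 1)).foldr
    (fun k s => s && !(decide (2 ≤ k) && decide (m % k = 0) && decide (j % k = 0))) true

lemma foldr_all (p : ℕ → Bool) (l : List ℕ) :
    (l.foldr (fun k s => s && p k) true = true) ↔ ∀ k ∈ l, p k = true := by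
  induction l with
  | nil => simp
  | cons a l ih => simp [Bool.and_eq_true, ih]; tauto

lemma coprimeB_iff (m j : ℕ) (hj : 0 < j) : coprimeB m j = true ↔ Nat.Coprime m j := by
  unfold coprimeB
  rw [foldr_all]
  constructor
  · intro h
    by_contra hg
    have hg0 : 0 < Nat.gcd m j := Nat.gcd_pos_of_pos_right m hj
    have hg2 : 2 ≤ Nat.gcd m j := by
      rw [Nat.Coprime] at hg
      omega
    have hdj : Nat.gcd m j ∣ j := Nat.gcd_dvd_right m j
    have hdm : Nat.gcd m j ∣ m := Nat.gcd_dvd_left m j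
    have hmem : Nat.gcd m j ∈ List.range (j + 1) := by
      rw [List.mem_range]
      have := Nat.le_of_dvd hj hdj
      omega
    have hmod_m : m % Nat.gcd m j = 0 := Nat.dvd_iff_mod_eq_zero.mp hdm
    have hmod_j : j % Nat.gcd m j = 0 := Nat.dvd_iff_mod_eq_zero.mp hdj
    have := h _ hmem
    simp [hg2, hmod_m, hmod_j] at this
  · intro h k hk
    simp only [Bool.not_eq_true', Bool.and_eq_false_iff]
    by_contra hcon
    simp only [not_or, Bool.not_eq_false, Bool.and_eq_true, decide_eq_true_eq] at hcon
    obtain ⟨⟨h2, hm⟩, hj'⟩ := hcon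
    have hkm : k ∣ m := Nat.dvd_of_mod_eq_zero hm
    have hkj : k ∣ j := Nat.dvd_of_mod_eq_zero hj'
    have : k ∣ Nat.gcd m j := Nat.dvd_gcd hkm hkj
    rw [h] at this
    have := Nat.le_of_dvd one_pos this
    omega

/-- the set of structural codes of rationals. -/
abbrev S : Set ℕ := Set.range (Encodable.encode : ℚ → ℕ)

instance : DecidablePred (· ∈ S) := Encodable.decidableRangeEncode ℚ

instance : Infinite S :=
  Infinite.of_injective _ (Equiv.ofInjective _ Encodable.encode_injective).injective

/-- validity test for codes. -/
def validB (c : ℕ) : Bool :=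
  decide (0 < c.unpair.2) && coprimeB (mag c.unpair.1) c.unpair.2

/-- decoding an integer from its code -/
def intDec (i : ℕ) : ℤ := if i % 2 = 1 then Int.negSucc (i / 2) else Int.ofNat (i / 2)

lemma encode_intDec (i : ℕ) : Encodable.encode (intDec i) = i := by
  unfold intDec
  split
  · rw [encode_int_negSucc]; omega
  · rw [encode_int_ofNat]; omega

lemma natAbs_intDec (i : ℕ) : (intDec i).natAbs = mag i := by
  unfold intDec mag
  split <;> simp <;> omega

lemma validB_iff (c : ℕ) : validB c = true ↔ c ∈ S := by
  constructor
  · intro h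
    unfold validB at h
    rw [Bool.and_eq_true, decide_eq_true_eq] at h
    obtain ⟨hj, hcop⟩ := h
    rw [coprimeB_iff _ _ hj] at hcop
    rw [← natAbs_intDec] at hcop
    refine ⟨⟨intDec c.unpair.1, c.unpair.2, by omega, hcop⟩, ?_⟩
    show Nat.pair (Encodable.encode (intDec c.unpair.1)) c.unpair.2 = c
    rw [encode_intDec, Nat.pair_unpair]
  · rintro ⟨q, rfl⟩
    show validB (E0 q) = true
    unfold validB E0
    simp only [Nat.unpair_pair]
    rw [Bool.and_eq_true, decide_eq_true_eq]
    refine ⟨q.pos, ?_⟩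
    rw [coprimeB_iff _ _ q.pos, mag_encode]
    exact q.reduced

/-! ### Counting valid codes -/

/-- number of valid codes below `c`. -/
def cnt (c : ℕ) : ℕ :=
  (List.range c).foldr (fun k s => cond (validB k) (s + 1) s) 0

lemma foldr_shift (l : List ℕ) (b : ℕ) :
    l.foldr (fun k s => cond (validB k) (s + 1) s) b
      = l.foldr (fun k s => cond (validB k) (s + 1) s) 0 + b := by
  induction l with
  | nil => simp
  | cons a l ih =>
    simp only [List.foldr_cons, ih]
    cases validB a <;> simp only [Bool.cond_false, Bool.cond_true] <;> omega

lemma cnt_succ (c : ℕ) : cnt (c + 1) = cnt c + cond (validB c) 1 0 := by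
  unfold cnt
  rw [List.range_succ, List.foldr_append]
  simp only [List.foldr_cons, List.foldr_nil]
  rw [foldr_shift]

lemma cnt_mono : Monotone cnt := by
  apply monotone_nat_of_le_succ
  intro n
  rw [cnt_succ]
  cases validB n <;> simp

lemma cnt_lt_of_valid {m c : ℕ} (hv : validB m = true) (h : m < c) : cnt m < cnt c := by
  have h1 : cnt (m + 1) = cnt m + 1 := by rw [cnt_succ, hv]; rfl
  have h2 : cnt (m + 1) ≤ cnt c := cnt_mono (show m + 1 ≤ c from h)
  omega

lemma cnt_congr {c c' : ℕ} (h : c ≤ c') (hv : ∀ k, c ≤ k → k < c' → validB k = false) :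
    cnt c' = cnt c := by
  induction c', h using Nat.le_induction with
  | base => rfl
  | succ c' h ih =>
    rw [cnt_succ, hv c' h (by omega)]
    simp only [cond_false, Nat.add_zero]
    exact ih fun k h1 h2 => hv k h1 (by omega)

lemma cnt_zero_of {c : ℕ} (h : ∀ k, k < c → validB k = false) : cnt c = 0 := by
  have h0 := cnt_congr (Nat.zero_le c) (fun k _ h2 => h k h2)
  rw [h0]
  rfl

/-! ### The increasing enumeration of valid codes -/

/-- the `n`-th valid code. -/
noncomputable def cN (n : ℕ) : ℕ := (Nat.Subtype.ofNat S n : ℕ)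

lemma cN_mem (n : ℕ) : cN n ∈ S := (Nat.Subtype.ofNat S n).2

lemma cN_valid (n : ℕ) : validB (cN n) = true := (validB_iff _).mpr (cN_mem n)

lemma cN_strictMono : StrictMono cN := by
  intro m n h
  have h2 := (Nat.Subtype.orderIsoOfNat S).strictMono h
  rw [Nat.Subtype.orderIsoOfNat_apply, Nat.Subtype.orderIsoOfNat_apply] at h2
  exact_mod_cast h2

lemma cN_surj {k : ℕ} (h : k ∈ S) : ∃ n, cN n = k := by
  obtain ⟨n, hn⟩ := Nat.Subtype.ofNat_surjective (s := S) ⟨k, h⟩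
  exact ⟨n, congrArg Subtype.val hn⟩

lemma cnt_cN : ∀ n, cnt (cN n) = n := by
  intro n
  induction n with
  | zero =>
    apply cnt_zero_of
    intro k hk
    by_contra hv
    rw [Bool.not_eq_false, validB_iff] at hv
    obtain ⟨m, rfl⟩ := cN_surj hv
    have : (0 : ℕ) ≤ m := Nat.zero_le m
    have := cN_strictMono.le_iff_le.mpr this
    omega
  | succ n ih =>
    have h1 : cN n < cN (n + 1) := cN_strictMono (by omega)
    have h2 : cnt (cN (n + 1)) = cnt (cN n + 1) := by
      apply cnt_congr (by omega)
      intro k hk1 hk2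
      by_contra hv
      rw [Bool.not_eq_false, validB_iff] at hv
      obtain ⟨m, rfl⟩ := cN_surj hv
      have hm1 : m < n + 1 := cN_strictMono.lt_iff_lt.mp hk2
      have : cN m ≤ cN n := cN_strictMono.le_iff_le.mpr (by omega)
      omega
    rw [h2, cnt_succ, cN_valid, ih]
    rfl

lemma cN_unique {n c : ℕ} (hv : validB c = true) (hc : cnt c = n) : c = cN n := by
  rw [validB_iff] at hv
  obtain ⟨m, rfl⟩ := cN_surj hv
  rw [cnt_cN] at hc
  rw [hc]

/-! ### Computability -/

/-- the search predicate. -/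
def P (n c : ℕ) : Bool := validB c && (cnt c == n)

lemma P_iff {n c : ℕ} : P n c = true ↔ c = cN n := by
  unfold P
  rw [Bool.and_eq_true, beq_iff_eq]
  constructor
  · rintro ⟨h1, h2⟩; exact cN_unique h1 h2
  · rintro rfl; exact ⟨cN_valid n, cnt_cN n⟩

lemma mag_pr : Primrec mag :=
  Primrec.nat_add.comp (Primrec.nat_div.comp .id (.const 2))
    (Primrec.nat_mod.comp .id (.const 2))

lemma coprimeB_pr : Primrec₂ coprimeB := by
  have hf : Primrec fun p : ℕ × ℕ => List.range (p.2 + 1) :=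
    Primrec.list_range.comp (Primrec.succ.comp Primrec.snd)
  have hh : Primrec₂ fun (p : ℕ × ℕ) (q : ℕ × Bool) =>
      q.2 && !(decide (2 ≤ q.1) && decide (p.1 % q.1 = 0) && decide (p.2 % q.1 = 0)) := by
    have h1 : Primrec fun x : (ℕ × ℕ) × ℕ × Bool => decide (2 ≤ x.2.1) :=
      (Primrec.nat_le.comp (Primrec.const 2) (Primrec.fst.comp Primrec.snd)).decide
    have h2 : Primrec fun x : (ℕ × ℕ) × ℕ × Bool => decide (x.1.1 % x.2.1 = 0) :=
      Primrec.eq.comp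
        (Primrec.nat_mod.comp (Primrec.fst.comp Primrec.fst) (Primrec.fst.comp Primrec.snd))
        (Primrec.const 0) |>.decide
    have h3 : Primrec fun x : (ℕ × ℕ) × ℕ × Bool => decide (x.1.2 % x.2.1 = 0) :=
      Primrec.eq.comp
        (Primrec.nat_mod.comp (Primrec.snd.comp Primrec.fst) (Primrec.fst.comp Primrec.snd))
        (Primrec.const 0) |>.decide
    have hand : Primrec₂ (· && ·) := Primrec.dom_bool₂ _
    have hnot : Primrec Bool.not := Primrec.dom_bool _
    exact Primrec.to₂ <|
      hand.comp (Primrec.snd.comp Primrec.snd)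
        (hnot.comp (hand.comp (hand.comp h1 h2) h3))
  have := Primrec.list_foldr hf (Primrec.const true) hh
  exact Primrec.to₂ (this.of_eq fun p => rfl)

lemma validB_pr : Primrec validB := by
  have h1 : Primrec fun c : ℕ => decide (0 < c.unpair.2) :=
    (Primrec.nat_lt.comp (Primrec.const 0) (Primrec.snd.comp Primrec.unpair)).decide
  have h2 : Primrec fun c : ℕ => coprimeB (mag c.unpair.1) c.unpair.2 :=
    coprimeB_pr.comp (mag_pr.comp (Primrec.fst.comp Primrec.unpair))
      (Primrec.snd.comp Primrec.unpair)
  exact (Primrec.dom_bool₂ (· && ·)).comp h1 h2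

lemma cnt_pr : Primrec cnt := by
  have hh : Primrec₂ fun (_ : ℕ) (q : ℕ × ℕ) => cond (validB q.1) (q.2 + 1) q.2 := by
    exact Primrec.to₂ <|
      Primrec.cond (validB_pr.comp (Primrec.fst.comp Primrec.snd))
        (Primrec.succ.comp (Primrec.snd.comp Primrec.snd))
        (Primrec.snd.comp Primrec.snd)
  have := Primrec.list_foldr Primrec.list_range (Primrec.const 0) hh
  exact this.of_eq fun c => rfl

lemma P_pr : Primrec₂ P := by
  have h1 : Primrec fun p : ℕ × ℕ => validB p.2 := validB_pr.comp Primrec.snd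
  have h2 : Primrec fun p : ℕ × ℕ => (cnt p.2 == p.1) :=
    Primrec.beq.comp (cnt_pr.comp Primrec.snd) Primrec.fst
  exact Primrec.to₂ <| (Primrec.dom_bool₂ (· && ·)).comp h1 h2

lemma cN_comp : Computable cN := by
  have hp : Partrec₂ fun (n c : ℕ) => (Part.some (P n c) : Part Bool) :=
    Computable₂.partrec₂ (Primrec₂.to_comp P_pr)
  have hrf := Partrec.rfind hp
  apply Partrec.of_eq_tot hrf
  intro n
  refine Nat.mem_rfind.mpr ?_
  constructor
  · rw [Part.mem_some_iff]
    exact (P_iff.mpr rfl).symm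
  · intro m hm
    rw [Part.mem_some_iff]
    cases hP : P n m
    · rfl
    · exact absurd (P_iff.mp hP) (by omega)

lemma equivRange_coe (q : ℚ) : (Encodable.equivRangeEncode ℚ q : ℕ) = Encodable.encode q := rfl

lemma ofNat_rat (n : ℕ) :
    Denumerable.ofNat ℚ n = (Encodable.equivRangeEncode ℚ).symm (Nat.Subtype.ofNat S n) := rfl

lemma E0_ofNat (n : ℕ) : E0 (Denumerable.ofNat ℚ n) = cN n := by
  rw [ofNat_rat, E0_eq_encode, ← equivRange_coe, Equiv.apply_symm_apply]
  rfl

lemma E0_comp : Computable E0 :=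
  (cN_comp.comp Computable.encode).of_eq fun q =>
    (E0_ofNat _).symm.trans (congrArg E0 (Denumerable.ofNat_encode q))

lemma leCode_pr : Primrec₂ leCode := by
  have hi₁ : Primrec fun p : ℕ × ℕ => p.1.unpair.1 :=
    Primrec.fst.comp (Primrec.unpair.comp Primrec.fst)
  have hj₁ : Primrec fun p : ℕ × ℕ => p.1.unpair.2 :=
    Primrec.snd.comp (Primrec.unpair.comp Primrec.fst)
  have hi₂ : Primrec fun p : ℕ × ℕ => p.2.unpair.1 :=
    Primrec.fst.comp (Primrec.unpair.comp Primrec.snd)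
  have hj₂ : Primrec fun p : ℕ × ℕ => p.2.unpair.2 :=
    Primrec.snd.comp (Primrec.unpair.comp Primrec.snd)
  have hc₁ : PrimrecPred fun p : ℕ × ℕ => p.1.unpair.1 % 2 = 1 :=
    Primrec.eq.comp (Primrec.nat_mod.comp hi₁ (Primrec.const 2)) (Primrec.const 1)
  have hc₂ : PrimrecPred fun p : ℕ × ℕ => p.2.unpair.1 % 2 = 1 :=
    Primrec.eq.comp (Primrec.nat_mod.comp hi₂ (Primrec.const 2)) (Primrec.const 1)
  have hd₁ : Primrec fun p : ℕ × ℕ =>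
      decide (mag p.2.unpair.1 * p.1.unpair.2 ≤ mag p.1.unpair.1 * p.2.unpair.2) :=
    Primrec.nat_le.comp (Primrec.nat_mul.comp (mag_pr.comp hi₂) hj₁)
      (Primrec.nat_mul.comp (mag_pr.comp hi₁) hj₂) |>.decide
  have hd₂ : Primrec fun p : ℕ × ℕ =>
      decide (mag p.1.unpair.1 * p.2.unpair.2 ≤ mag p.2.unpair.1 * p.1.unpair.2) :=
    Primrec.nat_le.comp (Primrec.nat_mul.comp (mag_pr.comp hi₁) hj₂)
      (Primrec.nat_mul.comp (mag_pr.comp hi₂) hj₁) |>.decide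
  have : Primrec fun p : ℕ × ℕ => leCode p.1 p.2 :=
    (Primrec.ite hc₁ (Primrec.ite hc₂ hd₁ (Primrec.const true))
      (Primrec.ite hc₂ (Primrec.const false) hd₂)).of_eq fun p => rfl
  exact this

/-! ### The computable comparison on ℚ -/

/-- Boolean comparison on ℚ -/
def leB (a b : ℚ) : Bool := leCode (E0 a) (E0 b)

lemma leB_comp : Computable₂ leB :=
  (Primrec₂.to_comp leCode_pr).comp (E0_comp.comp Computable.fst) (E0_comp.comp Computable.snd)

lemma leB_eq (a b : ℚ) : leB a b = decide (a ≤ b) := leCode_correct a b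

/-! ### Defeating the martingale -/

section Martingale

variable (d : List Bool → ℚ)

/-- the bit chosen to not increase the capital. -/
def bitf (w : List Bool) : Bool := !(leB (d (w ++ [false])) (d w))

/-- the prefix of length `n` of the constructed sequence. -/
def prefList : ℕ → List Bool := fun n => Nat.rec [] (fun _ IH => IH ++ [bitf d IH]) n

lemma prefList_succ (n : ℕ) : prefList d (n + 1) = prefList d n ++ [bitf d (prefList d n)] := rfl

lemma step_le (hd : IsMartingale d) (w : List Bool) : d (w ++ [bitf d w]) ≤ d w := by
  obtain ⟨hnn, hfair⟩ := hd
  cases h : leB (d (w ++ [false])) (d w) with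
  | true =>
    have hb : bitf d w = false := by rw [bitf, h]; rfl
    rw [hb]
    rw [leB_eq, decide_eq_true_eq] at h
    exact h
  | false =>
    have hb : bitf d w = true := by rw [bitf, h]; rfl
    rw [hb]
    rw [leB_eq, decide_eq_false_iff_not, not_le] at h
    have := hfair w
    linarith

lemma bitf_comp (hcomp : Computable d) : Computable (bitf d) := by
  have h1 : Computable fun w : List Bool => d (w ++ [false]) :=
    hcomp.comp (Computable.list_concat.comp Computable.id (Computable.const false))
  have h2 : Computable fun w : List Bool => leB (d (w ++ [false])) (d w) :=
    leB_comp.comp h1 hcomp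
  exact ((Primrec.dom_bool Bool.not).to_comp.comp h2).of_eq fun w => rfl

lemma prefList_comp (hcomp : Computable d) : Computable (prefList d) := by
  have hh : Computable₂ fun (_ : ℕ) (p : ℕ × List Bool) => p.2 ++ [bitf d p.2] := by
    exact Computable.to₂ <|
      Computable.list_concat.comp (Computable.snd.comp Computable.snd)
        ((bitf_comp d hcomp).comp (Computable.snd.comp Computable.snd))
  have := Computable.nat_rec Computable.id (Computable.const ([] : List Bool)) hh
  exact this.of_eq fun n => rfl

end Martingale

end MGAux

/-- For every total computable martingale d there is a computable sequence A
on which the capital of d is non-increasing; in particular d does not succeed on A. -/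
theorem defeat_single_total_computable_martingale
    (d : List Bool → ℚ) (hd : IsMartingale d) (hcomp : Computable d) :
    ∃ A : ℕ → Bool, Computable A ∧
      (∀ n : ℕ, d (prefixSeq A (n + 1)) ≤ d (prefixSeq A n)) ∧
      ¬ Succeeds d A := by
  classical
  set A : ℕ → Bool := fun n => MGAux.bitf d (MGAux.prefList d n) with hA
  have hAcomp : Computable A :=
    (MGAux.bitf_comp d hcomp).comp (MGAux.prefList_comp d hcomp)
  have hpref : ∀ n, prefixSeq A n = MGAux.prefList d n := by
    intro n
    induction n with
    | zero => rfl
    | succ n ih =>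
      show (List.range (n + 1)).map A = _
      rw [List.range_succ, List.map_append]
      rw [show (List.range n).map A = MGAux.prefList d n from ih, MGAux.prefList_succ]
      rfl
  have hdec : ∀ n : ℕ, d (prefixSeq A (n + 1)) ≤ d (prefixSeq A n) := by
    intro n
    rw [hpref, hpref, MGAux.prefList_succ]
    exact MGAux.step_le d hd _
  refine ⟨A, hAcomp, hdec, ?_⟩
  intro hS
  have hbound : ∀ n, d (prefixSeq A n) ≤ d (prefixSeq A 0) := by
    intro n
    induction n with
    | zero => exact le_refl _
    | succ n ih => exact le_trans (hdec n) ih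
  obtain ⟨n, hn⟩ := hS (d (prefixSeq A 0))
  exact absurd hn (not_lt.mpr (hbound n))
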